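/- Let I ⊂ K[x_1,x_2] be a monomial ideal generated in a single degree. Then the following are equivalent: (a) I is polymatroidal; (b) I has linear quotients with respect to the reverse lexicographical ordering of the minimal generators induced by every ordering of the variables; (c) I has a linear resolution. -/

import Mathlib

/-- A monomial in `n` variables, given by its exponent vector. -/
abbrev Mon (n : ℕ) := Fin n → ℕ

/-- Total degree of a monomial. -/
def mdeg {n : ℕ} (u : Mon n) : ℕ := ∑ i, u i

/-- The exponent vector of `x_j * (u / x_i)`. -/
def exch {n : ℕ} (u : Mon n) (i j : Fin n) : Mon n :=
  fun l => u l - (if l = i then 1 else 0) + (if l = j then 1 else 0)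

/-- Membership of the monomial `w` in the monomial ideal generated by the set `G`. -/
def memI {n : ℕ} (G : Set (Mon n)) (w : Mon n) : Prop :=
  ∃ u ∈ G, ∀ l, u l ≤ w l

/-- `G` (the set of minimal generators, all of one degree) is polymatroidal: the
exchange property holds. -/
def IsPolymatroidal {n : ℕ} (G : Set (Mon n)) : Prop :=
  ∀ u ∈ G, ∀ v ∈ G, ∀ i, v i < u i → ∃ j, u j < v j ∧ memI G (exch u i j)

/-- The (strict) lexicographic order on monomials of a common degree, induced by the
variable ordering `x_{σ 0} > x_{σ 1} > ⋯ > x_{σ (n-1)}`. -/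
def lexGT {n : ℕ} (σ : Fin n → Fin n) (u v : Mon n) : Prop :=
  ∃ i, v (σ i) < u (σ i) ∧ ∀ k, k < i → u (σ k) = v (σ k)

/-- `u ≥_lex v` with respect to the variable ordering given by `σ`. -/
def lexGE {n : ℕ} (σ : Fin n → Fin n) (u v : Mon n) : Prop :=
  u = v ∨ lexGT σ u v

/-- The (strict) reverse lexicographic order on monomials of a common degree, induced by
the variable ordering `x_{σ 0} > x_{σ 1} > ⋯ > x_{σ (n-1)}`. -/
def rlexGT {n : ℕ} (σ : Fin n → Fin n) (u v : Mon n) : Prop :=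
  ∃ i, u (σ i) < v (σ i) ∧ ∀ k, i < k → u (σ k) = v (σ k)

/-- `G` has linear quotients with respect to the order `gt`: for every `u ∈ G` the colon
ideal `(v ∈ G : gt v u) : u` is generated by variables, i.e. for every `v ∈ G` with
`gt v u` there is a variable `x_i` dividing `v : u` with `x_i·u` in the ideal generated
by the `gt`-larger generators. -/
def LinQuot {n : ℕ} (G : Set (Mon n)) (gt : Mon n → Mon n → Prop) : Prop :=
  ∀ u ∈ G, ∀ v ∈ G, gt v u →
    ∃ i, u i < v i ∧
      ∃ w ∈ G, gt w u ∧ ∀ l, w l ≤ u l + (if l = i then 1 else 0)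

/-- The monomial of `K[x_1,…,x_n]` with exponent vector `u`. -/
noncomputable def monOf {n : ℕ} (K : Type) [Field K] (u : Mon n) :
    MvPolynomial (Fin n) K :=
  MvPolynomial.monomial (Finsupp.equivFunOnFinite.symm u) 1

/-- `I` has a linear resolution starting in degree `d`: there is an exact complex of
finite free modules `⋯ → S^{b₂} → S^{b₁} → S^{b₀} → S → S/I` whose first map is given
by homogeneous polynomials of degree `d` generating `I` and whose other differentials
are matrices with entries homogeneous of degree `1` (so the resolution is minimal and
linear, i.e. `F_i = S(-d-i)^{b_i}`). -/
def HasLinearResolution {n : ℕ} (K : Type) [Field K] (d : ℕ)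
    (I : Ideal (MvPolynomial (Fin n) K)) : Prop :=
  ∃ (b : ℕ → ℕ) (g : Fin (b 0) → MvPolynomial (Fin n) K)
    (A : ∀ i : ℕ, Matrix (Fin (b i)) (Fin (b (i + 1))) (MvPolynomial (Fin n) K)),
    (∀ j, (g j).IsHomogeneous d) ∧
    (∀ i j l, ((A i) j l).IsHomogeneous 1) ∧
    I = Ideal.span (Set.range g) ∧
    (∀ x : Fin (b 0) → MvPolynomial (Fin n) K,
      (∑ j, g j * x j = 0) ↔ ∃ y, (A 0).mulVec y = x) ∧
    (∀ i : ℕ, ∀ x : Fin (b (i + 1)) → MvPolynomial (Fin n) K,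
      ((A i).mulVec x = 0) ↔ ∃ y, (A (i + 1)).mulVec y = x)


open MvPolynomial Finset

section PartA

variable {d : ℕ} {G : Set (Mon 2)}

/-- `StepDown G`: if some generator has smaller first exponent than `u`,
then `u - e₀ + e₁ ∈ G`. -/
def StepDown (G : Set (Mon 2)) : Prop :=
  ∀ u ∈ G, ∀ v ∈ G, v 0 < u 0 → exch u 0 1 ∈ G

def StepUp (G : Set (Mon 2)) : Prop :=
  ∀ u ∈ G, ∀ v ∈ G, u 0 < v 0 → exch u 1 0 ∈ G

lemma fin2cases (i : Fin 2) : i = 0 ∨ i = 1 := by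
  fin_cases i
  · exact Or.inl rfl
  · exact Or.inr rfl

lemma mdeg_two (u : Mon 2) : mdeg u = u 0 + u 1 := Fin.sum_univ_two u

lemma sum_eq_d (hdeg : ∀ u ∈ G, mdeg u = d) {u : Mon 2} (hu : u ∈ G) :
    u 0 + u 1 = d := by rw [← mdeg_two]; exact hdeg u hu

lemma exch01_apply (u : Mon 2) : exch u 0 1 0 = u 0 - 1 ∧ exch u 0 1 1 = u 1 + 1 := by
  constructor <;> simp [exch]

lemma exch10_apply (u : Mon 2) : exch u 1 0 0 = u 0 + 1 ∧ exch u 1 0 1 = u 1 - 1 := by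
  constructor <;> simp [exch]

lemma poly_iff_steps (hdeg : ∀ u ∈ G, mdeg u = d) :
    IsPolymatroidal G ↔ StepDown G ∧ StepUp G := by
  constructor
  · intro hp
    constructor
    · intro u hu v hv hlt
      obtain ⟨j, hj, w, hw, hle⟩ := hp u hu v hv 0 hlt
      have hud := sum_eq_d hdeg hu
      have hvd := sum_eq_d hdeg hv
      have hwd := sum_eq_d hdeg hw
      have hj1 : j = 1 := by
        rcases fin2cases j with rfl | rfl
        · omega
        · rfl
      subst hj1
      have h0 := hle 0
      have h1 := hle 1
      rw [(exch01_apply u).1] at h0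
      rw [(exch01_apply u).2] at h1
      have hw0 : w 0 = u 0 - 1 := by omega
      have hw1 : w 1 = u 1 + 1 := by omega
      have : w = exch u 0 1 := by
        funext l
        rcases fin2cases l with rfl | rfl
        · rw [hw0, (exch01_apply u).1]
        · rw [hw1, (exch01_apply u).2]
      exact this ▸ hw
    · intro u hu v hv hlt
      have hud := sum_eq_d hdeg hu
      have hvd := sum_eq_d hdeg hv
      have hlt1 : v 1 < u 1 := by omega
      obtain ⟨j, hj, w, hw, hle⟩ := hp u hu v hv 1 hlt1
      have hwd := sum_eq_d hdeg hw
      have hj0 : j = 0 := by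
        rcases fin2cases j with rfl | rfl
        · rfl
        · omega
      subst hj0
      have h0 := hle 0
      have h1 := hle 1
      rw [(exch10_apply u).1] at h0
      rw [(exch10_apply u).2] at h1
      have hw0 : w 0 = u 0 + 1 := by omega
      have hw1 : w 1 = u 1 - 1 := by omega
      have : w = exch u 1 0 := by
        funext l
        rcases fin2cases l with rfl | rfl
        · rw [hw0, (exch10_apply u).1]
        · rw [hw1, (exch10_apply u).2]
      exact this ▸ hw
  · rintro ⟨hsd, hsu⟩ u hu v hv i hlt
    have hud := sum_eq_d hdeg hu
    have hvd := sum_eq_d hdeg hv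
    rcases fin2cases i with rfl | rfl
    · exact ⟨1, by omega, exch u 0 1, hsd u hu v hv hlt, fun l => le_refl _⟩
    · have : u 0 < v 0 := by omega
      exact ⟨0, this, exch u 1 0, hsu u hu v hv this, fun l => le_refl _⟩

lemma rlex_char {σ : Fin 2 → Fin 2} (hσ : Function.Bijective σ)
    {u v : Mon 2} (hsum : u 0 + u 1 = v 0 + v 1) :
    rlexGT σ u v ↔ u (σ 1) < v (σ 1) := by
  have hne : σ 0 ≠ σ 1 := fun h => by
    have := hσ.injective h
    simp at this
  have hsig : (σ 0 = 0 ∧ σ 1 = 1) ∨ (σ 0 = 1 ∧ σ 1 = 0) := by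
    rcases fin2cases (σ 0) with h0 | h0 <;> rcases fin2cases (σ 1) with h1 | h1 <;>
      simp_all
  have hs : u (σ 0) + u (σ 1) = v (σ 0) + v (σ 1) := by
    rcases hsig with ⟨h0, h1⟩ | ⟨h0, h1⟩ <;> rw [h0, h1] <;> omega
  constructor
  · rintro ⟨i, hi, hk⟩
    rcases fin2cases i with rfl | rfl
    · have := hk 1 (by norm_num)
      omega
    · exact hi
  · intro h
    refine ⟨1, h, fun k hk => ?_⟩
    have := k.isLt
    rw [Fin.lt_def] at hk
    omega

lemma linquot_iff_steps (hdeg : ∀ u ∈ G, mdeg u = d) :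
    (∀ σ : Fin 2 → Fin 2, Function.Bijective σ → LinQuot G (rlexGT σ)) ↔
      StepDown G ∧ StepUp G := by
  constructor
  · intro h
    constructor
    · -- use σ = ![1,0]
      intro u hu v hv hlt
      have hσ : Function.Bijective (![1, 0] : Fin 2 → Fin 2) := by decide
      have hud := sum_eq_d hdeg hu
      have hvd := sum_eq_d hdeg hv
      have hgt : rlexGT ![1, 0] v u := by
        rw [rlex_char hσ (by omega)]
        simpa using hlt
      obtain ⟨i, hi, w, hw, hrw, hle⟩ := h _ hσ u hu v hv hgt
      have hwd := sum_eq_d hdeg hw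
      rw [rlex_char hσ (by omega)] at hrw
      simp only [Matrix.cons_val_one, Matrix.head_cons, Matrix.cons_val_zero] at hrw
      have hi1 : i = 1 := by
        rcases fin2cases i with rfl | rfl
        · omega
        · rfl
      subst hi1
      have h0 := hle 0
      have h1 := hle 1
      simp only [Fin.zero_eq_one_iff] at h0 h1
      norm_num at h0 h1
      have : w = exch u 0 1 := by
        funext l
        rcases fin2cases l with rfl | rfl
        · rw [(exch01_apply u).1]; omega
        · rw [(exch01_apply u).2]; omega
      exact this ▸ hw
    · intro u hu v hv hlt
      have hσ : Function.Bijective (id : Fin 2 → Fin 2) := Function.bijective_id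
      have hud := sum_eq_d hdeg hu
      have hvd := sum_eq_d hdeg hv
      have hgt : rlexGT id v u := by
        rw [rlex_char hσ (by omega)]
        simp only [id_eq]
        omega
      obtain ⟨i, hi, w, hw, hrw, hle⟩ := h _ hσ u hu v hv hgt
      have hwd := sum_eq_d hdeg hw
      rw [rlex_char hσ (by omega)] at hrw
      simp only [id_eq] at hrw
      have hi0 : i = 0 := by
        rcases fin2cases i with rfl | rfl
        · rfl
        · omega
      subst hi0
      have h0 := hle 0
      have h1 := hle 1
      norm_num at h0 h1
      have : w = exch u 1 0 := by
        funext l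
        rcases fin2cases l with rfl | rfl
        · rw [(exch10_apply u).1]; omega
        · rw [(exch10_apply u).2]; omega
      exact this ▸ hw
  · rintro ⟨hsd, hsu⟩ σ hσ u hu v hv hgt
    have hud := sum_eq_d hdeg hu
    have hvd := sum_eq_d hdeg hv
    rw [rlex_char hσ (by omega)] at hgt
    have hsig : (σ 0 = 0 ∧ σ 1 = 1) ∨ (σ 0 = 1 ∧ σ 1 = 0) := by
      have hne : σ 0 ≠ σ 1 := fun h => by
        have := hσ.injective h; simp at this
      rcases fin2cases (σ 0) with h0 | h0 <;> rcases fin2cases (σ 1) with h1 | h1 <;>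
        simp_all
    rcases hsig with ⟨h0, h1⟩ | ⟨h0, h1⟩
    · rw [h1] at hgt
      have hlt : u 0 < v 0 := by omega
      have hwG := hsu u hu v hv hlt
      have hwd := sum_eq_d hdeg hwG
      refine ⟨σ 0, by rw [h0]; omega, exch u 1 0, hwG, ?_, ?_⟩
      · rw [rlex_char hσ (by omega), h1, (exch10_apply u).2]
        omega
      · intro l
        rcases fin2cases l with rfl | rfl
        · rw [(exch10_apply u).1, h0]
          simp
        · rw [(exch10_apply u).2]
          omega
    · rw [h1] at hgt
      have hwG := hsd u hu v hv hgt
      have hwd := sum_eq_d hdeg hwG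
      refine ⟨σ 0, by rw [h0]; omega, exch u 0 1, hwG, ?_, ?_⟩
      · rw [rlex_char hσ (by omega), h1, (exch01_apply u).1]
        omega
      · intro l
        rcases fin2cases l with rfl | rfl
        · rw [(exch01_apply u).1]
          omega
        · rw [(exch01_apply u).2, h0]
          simp

end PartA

section Helpers

variable {K : Type} [Field K]

/-- The exponent finsupp `(p, q)` on `Fin 2`. -/
noncomputable def fvec (p q : ℕ) : Fin 2 →₀ ℕ :=
  Finsupp.equivFunOnFinite.symm ![p, q]

@[simp] lemma fvec_apply0 (p q : ℕ) : fvec p q 0 = p := by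
  simp [fvec]

@[simp] lemma fvec_apply1 (p q : ℕ) : fvec p q 1 = q := by
  simp [fvec]

lemma finsupp2_ext {s t : Fin 2 →₀ ℕ} (h0 : s 0 = t 0) (h1 : s 1 = t 1) : s = t := by
  ext l
  rcases (by omega : (l : ℕ) = 0 ∨ (l : ℕ) = 1) with h | h
  · have : l = 0 := by omega
    rw [this]; exact h0
  · have : l = 1 := Fin.ext h
    rw [this]; exact h1

lemma fvec_add (p q p' q' : ℕ) : fvec p q + fvec p' q' = fvec (p + p') (q + q') := by
  apply finsupp2_ext <;> simp

lemma fvec_inj {p q p' q' : ℕ} (h : fvec p q = fvec p' q') : p = p' ∧ q = q' := by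
  constructor
  · have := congrArg (fun s => s 0) h; simpa using this
  · have := congrArg (fun s => s 1) h; simpa using this

lemma deg_two (s : Fin 2 →₀ ℕ) : s.degree = s 0 + s 1 := by
  show (∑ i ∈ s.support, s i) = s 0 + s 1
  rw [Finset.sum_subset (Finset.subset_univ s.support)
    (fun i _ h => Finsupp.notMem_support_iff.mp h)]
  exact Fin.sum_univ_two s

@[simp] lemma fvec_degree (p q : ℕ) : (fvec p q).degree = p + q := by
  rw [deg_two]; simp

/-- The monomial `x^p y^q`. -/
noncomputable def mm (K : Type) [Field K] (p q : ℕ) : MvPolynomial (Fin 2) K :=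
  monomial (fvec p q) 1

lemma mm_mul (p q p' q' : ℕ) : mm K p q * mm K p' q' = mm K (p + p') (q + q') := by
  rw [mm, mm, mm, monomial_mul, fvec_add, one_mul]

lemma mm_ne_zero (p q : ℕ) : mm K p q ≠ 0 := by
  rw [mm, Ne, monomial_eq_zero]
  exact one_ne_zero

lemma single0_eq_fvec (p : ℕ) : Finsupp.single (0 : Fin 2) p = fvec p 0 := by
  apply finsupp2_ext <;> simp [Finsupp.single_apply]

lemma single1_eq_fvec (q : ℕ) : Finsupp.single (1 : Fin 2) q = fvec 0 q := by
  apply finsupp2_ext <;> simp [Finsupp.single_apply]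

lemma X0_pow (p : ℕ) : (X 0 : MvPolynomial (Fin 2) K) ^ p = mm K p 0 := by
  rw [X_pow_eq_monomial, mm, single0_eq_fvec]

lemma X1_pow (q : ℕ) : (X 1 : MvPolynomial (Fin 2) K) ^ q = mm K 0 q := by
  rw [X_pow_eq_monomial, mm, single1_eq_fvec]

lemma X0_eq_mm : (X 0 : MvPolynomial (Fin 2) K) = mm K 1 0 := by
  rw [← pow_one (X 0 : MvPolynomial (Fin 2) K), X0_pow]

lemma X1_eq_mm : (X 1 : MvPolynomial (Fin 2) K) = mm K 0 1 := by
  rw [← pow_one (X 1 : MvPolynomial (Fin 2) K), X1_pow]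

lemma mm_homog (p q : ℕ) : (mm K p q).IsHomogeneous (p + q) :=
  isHomogeneous_monomial _ (fvec_degree p q)

lemma coeff_mm (s : Fin 2 →₀ ℕ) (p q : ℕ) :
    coeff s (mm K p q) = if fvec p q = s then 1 else 0 := coeff_monomial _ _ _

/-- divisibility by `X i` from coefficients -/
lemma X_dvd_of_coeff {i : Fin 2} {p : MvPolynomial (Fin 2) K}
    (h : ∀ s : Fin 2 →₀ ℕ, s i = 0 → coeff s p = 0) : X i ∣ p := by
  rw [X_dvd_iff_modMonomial_eq_zero]
  apply MvPolynomial.ext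
  intro s
  rw [coeff_zero]
  by_cases hle : Finsupp.single i 1 ≤ s
  · exact coeff_modMonomial_of_le p hle
  · rw [coeff_modMonomial_of_not_le p hle]
    apply h
    by_contra hne
    exact hle (by
      rw [Finsupp.single_le_iff]
      omega)

end Helpers

section NatSyz
open MvPolynomial
variable {K : Type} [Field K]
lemma nat_syz : ∀ (e : ℕ) (x : ℕ → MvPolynomial (Fin 2) K),
    (∑ k ∈ Finset.range (e + 1), (X 0) ^ k * (X 1) ^ (e - k) * x k = 0) →
    ∃ y : ℕ → MvPolynomial (Fin 2) K, (∀ k, e ≤ k → y k = 0) ∧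
      ∀ k, k ≤ e → x k = X 0 * y k - (if k = 0 then 0 else X 1 * y (k - 1)) := by
  intro e
  induction e with
  | zero =>
    intro x hx
    simp only [Finset.sum_range_one, pow_zero, one_mul, Nat.zero_sub] at hx
    refine ⟨fun _ => 0, fun _ _ => rfl, fun k hk => ?_⟩
    interval_cases k
    simpa using hx
  | succ e ih =>
    intro x hx
    rw [Finset.sum_range_succ] at hx
    have hterm : ∀ k ∈ Finset.range (e + 1),
        (X 0 : MvPolynomial (Fin 2) K) ^ k * X 1 ^ (e + 1 - k) * x k =
        X 1 * (X 0 ^ k * X 1 ^ (e - k) * x k) := by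
      intro k hk
      rw [Finset.mem_range] at hk
      have h2 : e + 1 - k = (e - k) + 1 := by omega
      rw [h2, pow_succ]
      ring
    rw [Finset.sum_congr rfl hterm, ← Finset.mul_sum,
      (by omega : e + 1 - (e + 1) = 0), pow_zero, mul_one] at hx
    -- hx : X1 * ∑_{k ≤ e} X^k Y^{e-k} x k + X^{e+1} * x (e+1) = 0
    have hYdvd : (X 1 : MvPolynomial (Fin 2) K) ∣ x (e + 1) := by
      apply X_dvd_of_coeff
      intro s hs
      have hmul : (X 0 : MvPolynomial (Fin 2) K) ^ (e + 1) * x (e + 1) =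
          X 1 * (-∑ k ∈ Finset.range (e + 1), X 0 ^ k * X 1 ^ (e - k) * x k) := by
        rw [mul_neg]
        linear_combination hx
      have h1 : coeff (Finsupp.single 0 (e + 1) + s)
          ((X 0 : MvPolynomial (Fin 2) K) ^ (e + 1) * x (e + 1)) = coeff s (x (e + 1)) := by
        rw [X_pow_eq_monomial, coeff_monomial_mul, one_mul]
      rw [hmul, coeff_X_mul'] at h1
      rw [← h1, if_neg]
      simp [Finsupp.mem_support_iff, Finsupp.single_apply, hs]
    obtain ⟨c, hc⟩ := hYdvd
    set x' : ℕ → MvPolynomial (Fin 2) K :=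
      fun k => if k = e then x e + X 0 * c else x k with hx'def
    have hx'app : ∀ k, x' k = if k = e then x e + X 0 * c else x k := fun k => rfl
    have hx'sum : ∑ k ∈ Finset.range (e + 1), (X 0) ^ k * (X 1) ^ (e - k) * x' k = 0 := by
      have hsplit : ∑ k ∈ Finset.range (e + 1),
          (X 0 : MvPolynomial (Fin 2) K) ^ k * (X 1) ^ (e - k) * x' k
          = (∑ k ∈ Finset.range (e + 1), (X 0) ^ k * (X 1) ^ (e - k) * x k)
            + X 0 ^ (e + 1) * c := by
        rw [Finset.sum_range_succ, Finset.sum_range_succ]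
        have h1 : ∀ k ∈ Finset.range e,
            (X 0 : MvPolynomial (Fin 2) K) ^ k * (X 1) ^ (e - k) * x' k
            = (X 0) ^ k * (X 1) ^ (e - k) * x k := by
          intro k hk
          rw [Finset.mem_range] at hk
          rw [hx'app, if_neg (by omega : ¬ k = e)]
        rw [Finset.sum_congr rfl h1, hx'app, if_pos rfl,
          (by omega : e - e = 0), pow_zero, pow_succ]
        ring
      have key : (X 1 : MvPolynomial (Fin 2) K) *
          (∑ k ∈ Finset.range (e + 1), (X 0) ^ k * (X 1) ^ (e - k) * x' k) = 0 := by
        rw [hsplit, mul_add]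
        rw [hc] at hx
        linear_combination hx
      rcases mul_eq_zero.mp key with h | h
      · exact absurd h (X_ne_zero _)
      · exact h
    obtain ⟨y', hy'0, hy'⟩ := ih x' hx'sum
    set y : ℕ → MvPolynomial (Fin 2) K := fun k => if k = e then -c else y' k with hydef
    have hyapp : ∀ k, y k = if k = e then -c else y' k := fun k => rfl
    refine ⟨y, ?_, ?_⟩
    · intro k hk
      rw [hyapp, if_neg (by omega)]
      exact hy'0 k (by omega)
    · intro k hk
      rcases (by omega : (k < e) ∨ k = e ∨ k = e + 1) with hke | h | h
      · have hIH := hy' k (by omega)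
        rw [hx'app, if_neg (by omega : ¬ k = e)] at hIH
        rw [hIH, hyapp, if_neg (by omega : ¬ k = e)]
        rcases Nat.eq_zero_or_pos k with h0 | hkpos
        · rw [if_pos h0, if_pos h0]
        · rw [if_neg (by omega), if_neg (by omega), hyapp,
            if_neg (by omega : ¬ k - 1 = e)]
      · subst h
        have hIH := hy' k (le_refl _)
        rw [hx'app, if_pos rfl, hy'0 k (le_refl _), mul_zero, zero_sub] at hIH
        rw [hyapp, if_pos rfl]
        rcases Nat.eq_zero_or_pos k with h0 | hkpos
        · rw [if_pos h0]
          rw [if_pos h0, neg_zero] at hIH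
          linear_combination hIH
        · rw [if_neg (by omega)] at hIH ⊢
          rw [hyapp, if_neg (by omega : ¬ k - 1 = k)]
          linear_combination hIH
      · subst h
        rw [hyapp, if_neg (by omega : ¬ e + 1 = e), hy'0 (e + 1) (by omega),
          if_neg (by omega : ¬ e + 1 = 0), hyapp,
          if_pos (by omega : e + 1 - 1 = e), hc]
        ring
end NatSyz


section ResMat
variable {K : Type} [Field K]

/-- The matrix of adjacent linear syzygies. -/
noncomputable def resMat (K : Type) [Field K] (e : ℕ) :
    Matrix (Fin (e + 1)) (Fin e) (MvPolynomial (Fin 2) K) :=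
  fun j l => if (j : ℕ) = (l : ℕ) then X 0
    else if (j : ℕ) = (l : ℕ) + 1 then -(X 1) else 0

lemma resMat_homog (e : ℕ) (j : Fin (e + 1)) (l : Fin e) :
    ((resMat K e) j l).IsHomogeneous 1 := by
  unfold resMat
  split_ifs
  · exact isHomogeneous_X _ _
  · exact (isHomogeneous_X _ _).neg
  · exact isHomogeneous_zero _ _ _

lemma resMat_mulVec (e : ℕ) (y : Fin e → MvPolynomial (Fin 2) K) (j : Fin (e + 1)) :
    (resMat K e).mulVec y j =
      X 0 * (if h : (j : ℕ) < e then y ⟨j, h⟩ else 0)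
      - (if (j : ℕ) = 0 then 0
         else X 1 * (if h : (j : ℕ) - 1 < e then y ⟨(j : ℕ) - 1, h⟩ else 0)) := by
  have hsum : (resMat K e).mulVec y j = ∑ l : Fin e, resMat K e j l * y l := rfl
  have hsplit : ∀ l : Fin e, resMat K e j l * y l =
      (if (l : ℕ) = (j : ℕ) then X 0 * y l else 0)
      + (if (l : ℕ) + 1 = (j : ℕ) then -(X 1) * y l else 0) := by
    intro l
    unfold resMat
    by_cases h1 : (j : ℕ) = (l : ℕ)
    · rw [if_pos h1, if_pos h1.symm, if_neg (by omega), add_zero]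
    · rw [if_neg h1]
      by_cases h2 : (j : ℕ) = (l : ℕ) + 1
      · rw [if_pos h2, if_neg (fun hh => h1 hh.symm), if_pos (by omega), zero_add]
      · rw [if_neg h2, if_neg (fun hh => h1 hh.symm), if_neg (by omega), zero_mul,
          add_zero]
  rw [hsum, Finset.sum_congr rfl (fun l _ => hsplit l), Finset.sum_add_distrib]
  have hS1 : (∑ l : Fin e, if (l : ℕ) = (j : ℕ) then X 0 * y l else 0)
      = X 0 * (if h : (j : ℕ) < e then y ⟨j, h⟩ else 0) := by
    by_cases hj : (j : ℕ) < e
    · rw [dif_pos hj]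
      rw [Finset.sum_eq_single (⟨(j : ℕ), hj⟩ : Fin e)]
      · rw [if_pos rfl]
      · intro l _ hne
        rw [if_neg (fun hh => hne (Fin.ext hh))]
      · intro habs
        exact absurd (Finset.mem_univ _) habs
    · rw [dif_neg hj, mul_zero]
      apply Finset.sum_eq_zero
      intro l _
      rw [if_neg (by omega : ¬ (l : ℕ) = (j : ℕ))]
  have hS2 : (∑ l : Fin e, if (l : ℕ) + 1 = (j : ℕ) then -(X 1) * y l else 0)
      = - (if (j : ℕ) = 0 then 0
         else X 1 * (if h : (j : ℕ) - 1 < e then y ⟨(j : ℕ) - 1, h⟩ else 0)) := by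
    by_cases hj0 : (j : ℕ) = 0
    · rw [if_pos hj0, neg_zero]
      apply Finset.sum_eq_zero
      intro l _
      rw [if_neg (by omega)]
    · rw [if_neg hj0]
      by_cases hj1 : (j : ℕ) - 1 < e
      · rw [dif_pos hj1]
        rw [Finset.sum_eq_single (⟨(j : ℕ) - 1, hj1⟩ : Fin e)]
        · rw [if_pos ((by omega : (j : ℕ) - 1 + 1 = (j : ℕ)) :
            ((⟨(j : ℕ) - 1, hj1⟩ : Fin e) : ℕ) + 1 = (j : ℕ)), neg_mul]
        · intro l _ hne
          apply if_neg
          intro hh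
          apply hne
          apply Fin.ext
          show (l : ℕ) = (j : ℕ) - 1
          omega
        · intro habs
          exact absurd (Finset.mem_univ _) habs
      · rw [dif_neg hj1, mul_zero, neg_zero]
        apply Finset.sum_eq_zero
        intro l _
        rw [if_neg (by omega)]
  rw [hS1, hS2]
  ring

lemma resMat_inj (e : ℕ) (xv : Fin e → MvPolynomial (Fin 2) K)
    (h : (resMat K e).mulVec xv = 0) : xv = 0 := by
  have hb : ∀ k : ℕ, (if h : k < e then xv ⟨k, h⟩ else 0) = 0 := by
    intro k
    induction k using Nat.strong_induction_on with
    | _ k ih =>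
      by_cases hk : k < e
      · have hcomp := congrFun h ⟨k, by omega⟩
        rw [resMat_mulVec] at hcomp
        simp only [Pi.zero_apply, Fin.val_mk] at hcomp
        rcases Nat.eq_zero_or_pos k with h0 | hkpos
        · subst h0
          rw [if_pos rfl, sub_zero] at hcomp
          rw [dif_pos hk] at hcomp ⊢
          rcases mul_eq_zero.mp hcomp with hh | hh
          · exact absurd hh (X_ne_zero _)
          · exact hh
        · rw [if_neg (by omega : ¬ k = 0)] at hcomp
          have hprev := ih (k - 1) (by omega)
          rw [hprev, mul_zero, sub_zero] at hcomp
          rw [dif_pos hk] at hcomp ⊢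
          rcases mul_eq_zero.mp hcomp with hh | hh
          · exact absurd hh (X_ne_zero _)
          · exact hh
      · rw [dif_neg hk]
  funext l
  have := hb (l : ℕ)
  rw [dif_pos l.isLt] at this
  simpa using this

lemma res_syz_iff (m e d : ℕ) (hed : m + e ≤ d) (x : Fin (e + 1) → MvPolynomial (Fin 2) K) :
    (∑ j : Fin (e + 1), mm K (m + (j : ℕ)) (d - (m + (j : ℕ))) * x j = 0) ↔
    ∃ y : Fin e → MvPolynomial (Fin 2) K, (resMat K e).mulVec y = x := by
  constructor
  · intro hx
    -- factor out the common monomial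
    have hfac : ∀ j : Fin (e + 1),
        mm K (m + (j : ℕ)) (d - (m + (j : ℕ)))
        = mm K m (d - (m + e)) * ((X 0) ^ (j : ℕ) * (X 1) ^ (e - (j : ℕ))) := by
      intro j
      have hj := j.isLt
      rw [X0_pow, X1_pow, mm_mul, mm_mul]
      congr 1
      omega
    rw [Finset.sum_congr rfl (fun j _ => by rw [hfac j, mul_assoc])] at hx
    rw [← Finset.mul_sum] at hx
    rcases mul_eq_zero.mp hx with h | h
    · exact absurd h (mm_ne_zero _ _)
    · -- convert to ℕ-indexed sum
      set xb : ℕ → MvPolynomial (Fin 2) K :=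
        fun k => if hk : k < e + 1 then x ⟨k, hk⟩ else 0 with hxbdef
      have hxbapp : ∀ k, xb k = if hk : k < e + 1 then x ⟨k, hk⟩ else 0 := fun k => rfl
      have hsum : ∑ k ∈ Finset.range (e + 1), (X 0 : MvPolynomial (Fin 2) K) ^ k * (X 1) ^ (e - k) * xb k = 0 := by
        rw [← Fin.sum_univ_eq_sum_range
          (fun k => (X 0 : MvPolynomial (Fin 2) K) ^ k * (X 1) ^ (e - k) * xb k) (e + 1)]
        rw [← h]
        apply Finset.sum_congr rfl
        intro j _
        rw [hxbapp, dif_pos j.isLt, Fin.eta]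
      obtain ⟨y, hy0, hy⟩ := nat_syz e xb hsum
      refine ⟨fun l => y (l : ℕ), ?_⟩
      funext j
      rw [resMat_mulVec]
      have hyb : ∀ k : ℕ, (if h : k < e then y k else 0) = y k := by
        intro k
        by_cases hk : k < e
        · rw [dif_pos hk]
        · rw [dif_neg hk, hy0 k (by omega)]
      rw [hyb, hyb]
      have hxj := hy (j : ℕ) (by omega)
      rw [hxbapp, dif_pos j.isLt, Fin.eta] at hxj
      rw [← hxj]
  · rintro ⟨y, rfl⟩
    have hsplit : ∀ (j : Fin (e + 1)) (l : Fin e),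
        mm K (m + (j : ℕ)) (d - (m + (j : ℕ))) * (resMat K e j l * y l)
        = ((if (j : ℕ) = (l : ℕ) then mm K (m + (j : ℕ)) (d - (m + (j : ℕ))) * X 0 else 0)
          + (if (j : ℕ) = (l : ℕ) + 1 then mm K (m + (j : ℕ)) (d - (m + (j : ℕ))) * (-(X 1)) else 0)) * y l := by
      intro j l
      unfold resMat
      by_cases h1 : (j : ℕ) = (l : ℕ)
      · rw [if_pos h1, if_pos h1, if_neg (by omega), add_zero]
        ring
      · rw [if_neg h1, if_neg h1]
        by_cases h2 : (j : ℕ) = (l : ℕ) + 1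
        · rw [if_pos h2, if_pos h2, zero_add]
          ring
        · rw [if_neg h2, if_neg h2, zero_add]
          ring
    have hmv : ∀ j : Fin (e + 1), (resMat K e).mulVec y j = ∑ l : Fin e, resMat K e j l * y l :=
      fun j => rfl
    calc ∑ j : Fin (e + 1), mm K (m + (j : ℕ)) (d - (m + (j : ℕ))) * (resMat K e).mulVec y j
        = ∑ j : Fin (e + 1), ∑ l : Fin e,
            mm K (m + (j : ℕ)) (d - (m + (j : ℕ))) * (resMat K e j l * y l) := by
          apply Finset.sum_congr rfl
          intro j _
          rw [hmv j, Finset.mul_sum]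
      _ = ∑ l : Fin e, ∑ j : Fin (e + 1),
            mm K (m + (j : ℕ)) (d - (m + (j : ℕ))) * (resMat K e j l * y l) :=
          Finset.sum_comm
      _ = 0 := by
          apply Finset.sum_eq_zero
          intro l _
          rw [Finset.sum_congr rfl (fun j _ => hsplit j l), ← Finset.sum_mul]
          have hinner : (∑ j : Fin (e + 1),
              ((if (j : ℕ) = (l : ℕ) then mm K (m + (j : ℕ)) (d - (m + (j : ℕ))) * X 0 else 0)
              + (if (j : ℕ) = (l : ℕ) + 1 then mm K (m + (j : ℕ)) (d - (m + (j : ℕ))) * (-(X 1)) else 0)))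
              = 0 := by
            rw [Finset.sum_add_distrib]
            have hl := l.isLt
            have e1 : (∑ j : Fin (e + 1), if (j : ℕ) = (l : ℕ) then mm K (m + (j : ℕ)) (d - (m + (j : ℕ))) * X 0 else 0)
                = mm K (m + (l : ℕ)) (d - (m + (l : ℕ))) * X 0 := by
              rw [Finset.sum_eq_single (⟨(l : ℕ), by omega⟩ : Fin (e + 1))]
              · rw [if_pos rfl]
              · intro j _ hne
                rw [if_neg (fun hh => hne (Fin.ext hh))]
              · intro habs
                exact absurd (Finset.mem_univ _) habs
            have e2 : (∑ j : Fin (e + 1), if (j : ℕ) = (l : ℕ) + 1 then mm K (m + (j : ℕ)) (d - (m + (j : ℕ))) * (-(X 1)) else 0)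
                = mm K (m + ((l : ℕ) + 1)) (d - (m + ((l : ℕ) + 1))) * (-(X 1)) := by
              rw [Finset.sum_eq_single (⟨(l : ℕ) + 1, by omega⟩ : Fin (e + 1))]
              · rw [if_pos rfl]
              · intro j _ hne
                rw [if_neg (fun hh => hne (Fin.ext hh))]
              · intro habs
                exact absurd (Finset.mem_univ _) habs
            rw [e1, e2, X0_eq_mm, X1_eq_mm, mul_neg, mm_mul, mm_mul,
              (show m + (l : ℕ) + 1 = m + ((l : ℕ) + 1) + 0 by omega),
              (show d - (m + (l : ℕ)) + 0 = d - (m + ((l : ℕ) + 1)) + 1 by omega)]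
            exact add_neg_cancel _
          rw [hinner, zero_mul]

end ResMat


section PartB
variable {K : Type} [Field K] {d : ℕ} {G : Set (Mon 2)}

lemma monOf_eq_mm (u : Mon 2) : monOf K u = mm K (u 0) (u 1) := by
  rw [monOf, mm]
  have h : Finsupp.equivFunOnFinite.symm u = fvec (u 0) (u 1) := by
    apply finsupp2_ext <;> simp
  rw [h]

lemma steps_to_res (hdeg : ∀ u ∈ G, mdeg u = d) (hsd : StepDown G) (hsu : StepUp G) :
    HasLinearResolution K d (Ideal.span (monOf K '' G)) := by
  by_cases hGe : G = ∅
  · subst hGe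
    refine ⟨fun _ => 0, fun j => j.elim0, fun i => 0, fun j => j.elim0, ?_, ?_, ?_, ?_⟩
    · intro i j l
      exact isHomogeneous_zero _ _ _
    · rw [Set.image_empty, Set.range_eq_empty]
    · intro x
      constructor
      · intro _
        exact ⟨fun j => j.elim0, funext fun j => j.elim0⟩
      · intro _
        rw [show (Finset.univ : Finset (Fin 0)) = ∅ from rfl, Finset.sum_empty]
    · intro i x
      constructor
      · intro _
        exact ⟨fun j => j.elim0, funext fun j => j.elim0⟩
      · intro _
        funext j
        exact j.elim0
  · obtain ⟨u₀, hu₀⟩ := Set.nonempty_iff_ne_empty.mpr hGe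
    set A : Set ℕ := (fun u => u 0) '' G with hAdef
    have hAne : A.Nonempty := ⟨u₀ 0, ⟨u₀, hu₀, rfl⟩⟩
    have hAb : ∀ a ∈ A, a ≤ d := by
      rintro a ⟨u, hu, rfl⟩
      have := sum_eq_d hdeg hu
      show u 0 ≤ d
      omega
    have hbdd : BddAbove A := ⟨d, fun a ha => hAb a ha⟩
    set M := sSup A with hMdef
    set m := sInf A with hmdef
    have hMA : M ∈ A := Nat.sSup_mem hAne hbdd
    have hmA : m ∈ A := Nat.sInf_mem hAne
    have hmM : m ≤ M := Nat.sInf_le hMA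
    have hMd : M ≤ d := hAb M hMA
    set e := M - m with hedef
    have hfill : ∀ k, k ≤ e → (m + k) ∈ A := by
      intro k
      induction k with
      | zero => simpa using hmA
      | succ k ih =>
        intro hk
        obtain ⟨u, hu, hu0⟩ := ih (by omega)
        obtain ⟨v, hv, hv0⟩ := hMA
        have hu0' : u 0 = m + k := hu0
        have hv0' : v 0 = M := hv0
        clear hu0 hv0
        have hlt : u 0 < v 0 := by omega
        refine ⟨exch u 1 0, hsu u hu v hv hlt, ?_⟩
        show exch u 1 0 0 = m + (k + 1)
        rw [(exch10_apply _).1]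
        omega
    have hAint : ∀ a ∈ A, m ≤ a ∧ a ≤ M :=
      fun a ha => ⟨Nat.sInf_le ha, le_csSup hbdd ha⟩
    set gfun : Fin (e + 1) → MvPolynomial (Fin 2) K :=
      fun j => mm K (m + (j : ℕ)) (d - (m + (j : ℕ))) with hgdef
    have hgapp : ∀ j : Fin (e + 1), gfun j = mm K (m + (j : ℕ)) (d - (m + (j : ℕ))) :=
      fun j => rfl
    have hGeq : monOf K '' G = Set.range gfun := by
      ext p
      constructor
      · rintro ⟨u, hu, rfl⟩
        have hud := sum_eq_d hdeg hu
        have hu0A : u 0 ∈ A := ⟨u, hu, rfl⟩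
        obtain ⟨h1, h2⟩ := hAint _ hu0A
        refine ⟨⟨u 0 - m, by omega⟩, ?_⟩
        rw [hgapp, monOf_eq_mm]
        simp only [Fin.val_mk]
        rw [(show m + (u 0 - m) = u 0 by omega), (show d - u 0 = u 1 by omega)]
      · rintro ⟨j, rfl⟩
        have hj := j.isLt
        obtain ⟨u, hu, hu0⟩ := hfill (j : ℕ) (by omega)
        have hud := sum_eq_d hdeg hu
        have hu0' : u 0 = m + (j : ℕ) := hu0
        clear hu0
        refine ⟨u, hu, ?_⟩
        rw [monOf_eq_mm, hgapp, hu0',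
          (show u 1 = d - (m + (j : ℕ)) by omega)]
    refine ⟨(fun i => match i with | 0 => e + 1 | 1 => e | _ + 2 => 0),
      gfun,
      (fun i => match i with | 0 => resMat K e | _ + 1 => 0),
      ?_, ?_, ?_, ?_, ?_⟩
    · intro j
      have hj : (j : ℕ) < e + 1 := j.isLt
      have hh := mm_homog (K := K) (m + (j : ℕ)) (d - (m + (j : ℕ)))
      rw [(show (m + (j : ℕ)) + (d - (m + (j : ℕ))) = d by omega)] at hh
      exact hh
    · intro i j l
      cases i with
      | zero => exact resMat_homog e j l
      | succ k => exact isHomogeneous_zero _ _ _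
    · rw [hGeq]
    · intro x
      exact res_syz_iff m e d (by omega) x
    · intro i x
      cases i with
      | zero =>
        constructor
        · intro h0
          have hx0 := resMat_inj e x h0
          refine ⟨fun t => t.elim0, ?_⟩
          show (0 : Matrix (Fin e) (Fin 0) (MvPolynomial (Fin 2) K)).mulVec _ = x
          rw [Matrix.zero_mulVec, hx0]
        · rintro ⟨y, rfl⟩
          show (resMat K e).mulVec
            ((0 : Matrix (Fin e) (Fin 0) (MvPolynomial (Fin 2) K)).mulVec y) = 0
          rw [Matrix.zero_mulVec, Matrix.mulVec_zero]
      | succ k =>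
        constructor
        · intro _
          refine ⟨fun t => t.elim0, ?_⟩
          funext j
          exact j.elim0
        · intro _
          show (0 : Matrix (Fin (match k + 1 with | 0 => e + 1 | 1 => e | _ + 2 => 0))
              (Fin 0) (MvPolynomial (Fin 2) K)).mulVec x = 0
          rw [Matrix.zero_mulVec]

end PartB


section PartC
variable {K : Type} [Field K] {d : ℕ} {G : Set (Mon 2)}

lemma coeff_span_zero {p : MvPolynomial (Fin 2) K}
    (hp : p ∈ Ideal.span (monOf K '' G)) (s : Fin 2 →₀ ℕ)
    (hs : ∀ u ∈ G, ¬ (u 0 ≤ s 0 ∧ u 1 ≤ s 1)) : coeff s p = 0 := by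
  have main : ∀ (t : Fin 2 →₀ ℕ), (∀ u ∈ G, ¬ (u 0 ≤ t 0 ∧ u 1 ≤ t 1)) → coeff t p = 0 := by
    refine Submodule.span_induction
      (p := fun q _ => ∀ (t : Fin 2 →₀ ℕ),
        (∀ u ∈ G, ¬ (u 0 ≤ t 0 ∧ u 1 ≤ t 1)) → coeff t q = 0)
      ?_ ?_ ?_ ?_ hp
    · rintro q ⟨u, hu, rfl⟩ t ht
      rw [monOf, coeff_monomial, if_neg]
      intro heq
      refine ht u hu ⟨?_, ?_⟩
      · have := congrArg (fun s => s 0) heq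
        simp only [Finsupp.coe_equivFunOnFinite_symm] at this
        omega
      · have := congrArg (fun s => s 1) heq
        simp only [Finsupp.coe_equivFunOnFinite_symm] at this
        omega
    · intro t _
      rw [coeff_zero]
    · intro q r _ _ hq hr t ht
      rw [coeff_add, hq t ht, hr t ht, add_zero]
    · intro f q _ hq t ht
      rw [smul_eq_mul, coeff_mul]
      apply Finset.sum_eq_zero
      rintro ⟨t1, t2⟩ hmem
      rw [Finset.HasAntidiagonal.mem_antidiagonal] at hmem
      have h0 : t1 0 + t2 0 = t 0 := by rw [← Finsupp.add_apply, hmem]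
      have h1 : t1 1 + t2 1 = t 1 := by rw [← Finsupp.add_apply, hmem]
      have := hq t2 (fun u hu hle => ht u hu ⟨by omega, by omega⟩)
      rw [this, mul_zero]
  exact main s hs

lemma homcomp_mul {n : ℕ} (f p : MvPolynomial (Fin 2) K) (hp : p.IsHomogeneous n) :
    homogeneousComponent n (f * p) = C (coeff 0 f) * p := by
  apply MvPolynomial.ext
  intro s
  rw [coeff_homogeneousComponent, coeff_C_mul]
  by_cases hdeg : s.degree = n
  · rw [if_pos hdeg, coeff_mul]
    rw [Finset.sum_eq_single ((0 : Fin 2 →₀ ℕ), s)]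
    · intro t hmem hne
      rw [Finset.HasAntidiagonal.mem_antidiagonal] at hmem
      by_cases hz : coeff t.2 p = 0
      · rw [hz, mul_zero]
      · exfalso
        have ht2 : t.2.degree = n := by
          by_contra hcon
          exact hz (hp.coeff_eq_zero hcon)
        have h0 : t.1 0 + t.2 0 = s 0 := by rw [← Finsupp.add_apply, hmem]
        have h1 : t.1 1 + t.2 1 = s 1 := by rw [← Finsupp.add_apply, hmem]
        rw [deg_two] at hdeg ht2
        have ht10 : t.1 0 = 0 := by omega
        have ht11 : t.1 1 = 0 := by omega
        have heq1 : t.1 = 0 := finsupp2_ext (by simpa using ht10) (by simpa using ht11)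
        have heq2 : t.2 = s := by rw [← hmem, heq1, zero_add]
        exact hne (Prod.ext heq1 heq2)
    · intro habs
      exact absurd (Finset.HasAntidiagonal.mem_antidiagonal.mpr (zero_add s)) habs
  · rw [if_neg hdeg, hp.coeff_eq_zero hdeg, mul_zero]

lemma const_combo {N : ℕ} {n : ℕ} (g : Fin N → MvPolynomial (Fin 2) K)
    (hg : ∀ j, (g j).IsHomogeneous n)
    {p : MvPolynomial (Fin 2) K} (hp : p ∈ Ideal.span (Set.range g))
    (hph : p.IsHomogeneous n) :
    ∃ c : Fin N → K, ∑ j, C (c j) * g j = p := by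
  obtain ⟨f, hf⟩ := (Submodule.mem_span_range_iff_exists_fun (MvPolynomial (Fin 2) K)).mp hp
  refine ⟨fun j => coeff 0 (f j), ?_⟩
  calc ∑ j, C (coeff 0 (f j)) * g j
      = ∑ j, homogeneousComponent n (f j * g j) := by
        exact Finset.sum_congr rfl (fun j _ => (homcomp_mul _ _ (hg j)).symm)
    _ = homogeneousComponent n (∑ j, f j * g j) := (map_sum _ _ _).symm
    _ = homogeneousComponent n p := by
        rw [show (∑ j, f j * g j) = p from by
          rw [← hf]
          exact Finset.sum_congr rfl (fun j _ => (smul_eq_mul _ _ : f j • g j = f j * g j).symm)]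
    _ = p := by
        rw [homogeneousComponent_of_mem ((mem_homogeneousSubmodule _ _).mpr hph),
          if_pos rfl]

lemma res_gap (hdeg : ∀ u ∈ G, mdeg u = d)
    (hres : HasLinearResolution K d (Ideal.span (monOf K '' G))) :
    ∀ (u v : Mon 2), u ∈ G → v ∈ G → u 0 + 2 ≤ v 0 →
      (∀ w ∈ G, w 0 ≠ u 0 + 1) → False := by
  obtain ⟨b, g, Amat, hg, hA, hspan, hsyz0, _⟩ := hres
  intro u v hu hv hac hnA
  have hud := sum_eq_d hdeg hu
  have hvd := sum_eq_d hdeg hv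
  set δ := v 0 - u 0 with hδdef
  -- memberships and constant representations
  have hma : monOf K u ∈ Ideal.span (Set.range g) := by
    rw [← hspan]; exact Ideal.subset_span ⟨u, hu, rfl⟩
  have hmc : monOf K v ∈ Ideal.span (Set.range g) := by
    rw [← hspan]; exact Ideal.subset_span ⟨v, hv, rfl⟩
  have hmah : (monOf K u).IsHomogeneous d := by
    rw [monOf_eq_mm]
    have h := mm_homog (K := K) (u 0) (u 1)
    rwa [hud] at h
  have hmch : (monOf K v).IsHomogeneous d := by
    rw [monOf_eq_mm]
    have h := mm_homog (K := K) (v 0) (v 1)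
    rwa [hvd] at h
  obtain ⟨ca, hca⟩ := const_combo g hg hma hmah
  obtain ⟨cc, hcc⟩ := const_combo g hg hmc hmch
  set κ : Fin (b 0) → K := fun j => coeff (fvec (u 0) (u 1)) (g j) with hκdef
  have hκapp : ∀ j, κ j = coeff (fvec (u 0) (u 1)) (g j) := fun _ => rfl
  set x : Fin (b 0) → MvPolynomial (Fin 2) K :=
    fun j => X 0 ^ δ * C (ca j) - X 1 ^ δ * C (cc j) with hxdef
  have hxapp : ∀ j, x j = X 0 ^ δ * C (ca j) - X 1 ^ δ * C (cc j) := fun _ => rfl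
  -- x is a syzygy of g
  have hx : ∑ j, g j * x j = 0 := by
    have hterm : ∀ j, g j * x j
        = X 0 ^ δ * (C (ca j) * g j) - X 1 ^ δ * (C (cc j) * g j) := by
      intro j; rw [hxapp]; ring
    rw [Finset.sum_congr rfl (fun j _ => hterm j), Finset.sum_sub_distrib,
      ← Finset.mul_sum, ← Finset.mul_sum, hca, hcc, monOf_eq_mm, monOf_eq_mm,
      X0_pow, X1_pow, mm_mul, mm_mul,
      (show δ + u 0 = 0 + v 0 by omega), (show 0 + u 1 = δ + v 1 by omega)]
    exact sub_self _
  obtain ⟨y, hy⟩ := (hsyz0 x).mp hx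
  -- columns of Amat 0 are syzygies of g
  have hcol : ∀ l, ∑ j, g j * Amat 0 j l = 0 := by
    intro l
    apply (hsyz0 (fun j => Amat 0 j l)).mpr
    refine ⟨(Pi.single l 1 : Fin (b (0 + 1)) → MvPolynomial (Fin 2) K), ?_⟩
    rw [Matrix.mulVec_single]
    funext j
    rw [MulOpposite.op_one, one_smul]
    rfl
  -- key coefficient vanishing
  have hterm2 : ∀ (j : Fin (b 0)) (l : Fin (b 1)),
      coeff (fvec (u 0 + 1) (u 1)) (g j * Amat 0 j l)
      = κ j * coeff (fvec 1 0) (Amat 0 j l) := by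
    intro j l
    rw [coeff_mul, Finset.sum_eq_single ((fvec (u 0) (u 1), fvec 1 0) : _ × _)]
    · rintro ⟨t1, t2⟩ hmem hne
      rw [Finset.HasAntidiagonal.mem_antidiagonal] at hmem
      by_cases hz : coeff t2 (Amat 0 j l) = 0
      · rw [hz, mul_zero]
      · have ht2 : t2.degree = 1 := by
          by_contra hcon
          exact hz ((hA 0 j l).coeff_eq_zero hcon)
        rw [deg_two] at ht2
        have h0 : t1 0 + t2 0 = u 0 + 1 := by
          rw [← Finsupp.add_apply, hmem, fvec_apply0]
        have h1 : t1 1 + t2 1 = u 1 := by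
          rw [← Finsupp.add_apply, hmem, fvec_apply1]
        rcases (by omega : (t2 0 = 1 ∧ t2 1 = 0) ∨ (t2 0 = 0 ∧ t2 1 = 1)) with
          ⟨ha0, ha1⟩ | ⟨ha0, ha1⟩
        · exfalso
          apply hne
          have e1 : t1 = fvec (u 0) (u 1) :=
            finsupp2_ext (by rw [fvec_apply0]; omega) (by rw [fvec_apply1]; omega)
          have e2 : t2 = fvec 1 0 :=
            finsupp2_ext (by rw [fvec_apply0]; omega) (by rw [fvec_apply1]; omega)
          exact Prod.ext e1 e2
        · have hz1 : coeff t1 (g j) = 0 := by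
            apply coeff_span_zero (G := G) (by rw [hspan]; exact Ideal.subset_span ⟨j, rfl⟩)
            rintro w hw ⟨hw0, hw1⟩
            have hwd := sum_eq_d hdeg hw
            exact hnA w hw (by omega)
          rw [hz1, zero_mul]
    · intro habs
      refine absurd (Finset.HasAntidiagonal.mem_antidiagonal.mpr ?_) habs
      apply finsupp2_ext <;> simp [Finsupp.add_apply]
  have hbeta : ∀ l, ∑ j, κ j * coeff (fvec 1 0) (Amat 0 j l) = 0 := by
    intro l
    have h := congrArg (coeff (fvec (u 0 + 1) (u 1))) (hcol l)
    rw [coeff_zero, MvPolynomial.coeff_sum,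
      Finset.sum_congr rfl (fun j _ => hterm2 j l)] at h
    exact h
  -- the functional applied to x, two evaluations
  have hsa : ∑ j, κ j * ca j = 1 := by
    have h := congrArg (coeff (fvec (u 0) (u 1))) hca
    rw [MvPolynomial.coeff_sum,
      Finset.sum_congr rfl (fun j _ => coeff_C_mul (fvec (u 0) (u 1)) (ca j) (g j)),
      monOf_eq_mm, coeff_mm, if_pos rfl] at h
    rw [← h]
    exact Finset.sum_congr rfl (fun j _ => by rw [hκapp, mul_comm])
  have hsc : ∑ j, κ j * cc j = 0 := by
    have h := congrArg (coeff (fvec (u 0) (u 1))) hcc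
    rw [MvPolynomial.coeff_sum,
      Finset.sum_congr rfl (fun j _ => coeff_C_mul (fvec (u 0) (u 1)) (cc j) (g j)),
      monOf_eq_mm, coeff_mm, if_neg (fun heq => by have := (fvec_inj heq).1; omega)] at h
    rw [← h]
    exact Finset.sum_congr rfl (fun j _ => by rw [hκapp, mul_comm])
  have hPhi : ∑ j, C (κ j) * x j = mm K δ 0 := by
    have hterm3 : ∀ j, C (κ j) * x j
        = X 0 ^ δ * C (κ j * ca j) - X 1 ^ δ * C (κ j * cc j) := by
      intro j; rw [hxapp, map_mul, map_mul]; ring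
    rw [Finset.sum_congr rfl (fun j _ => hterm3 j), Finset.sum_sub_distrib,
      ← Finset.mul_sum, ← Finset.mul_sum, ← map_sum, ← map_sum, hsa, hsc,
      map_one, map_zero, mul_one, mul_zero, sub_zero, X0_pow]
  have hrepr : ∑ j, C (κ j) * x j = ∑ l, (∑ j, C (κ j) * Amat 0 j l) * y l := by
    have hxmv : ∀ j, x j = ∑ l, Amat 0 j l * y l := by
      intro j
      rw [← hy]
      rfl
    calc ∑ j, C (κ j) * x j
        = ∑ j, ∑ l, C (κ j) * (Amat 0 j l * y l) := by
          refine Finset.sum_congr rfl fun j _ => ?_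
          rw [hxmv j, Finset.mul_sum]
      _ = ∑ l, ∑ j, C (κ j) * (Amat 0 j l * y l) := Finset.sum_comm
      _ = ∑ l, (∑ j, C (κ j) * Amat 0 j l) * y l := by
          refine Finset.sum_congr rfl fun l _ => ?_
          rw [Finset.sum_mul]
          exact Finset.sum_congr rfl fun j _ => (mul_assoc _ _ _).symm
  have h2 : coeff (fvec δ 0) (∑ l, (∑ j, C (κ j) * Amat 0 j l) * y l) = 0 := by
    rw [MvPolynomial.coeff_sum]
    apply Finset.sum_eq_zero
    intro l _
    rw [coeff_mul]
    apply Finset.sum_eq_zero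
    rintro ⟨t1, t2⟩ hmem
    rw [Finset.HasAntidiagonal.mem_antidiagonal] at hmem
    suffices hsuf : coeff t1 (∑ j, C (κ j) * Amat 0 j l) = 0 by
      rw [hsuf, zero_mul]
    rw [MvPolynomial.coeff_sum]
    by_cases hex : ∀ j, coeff t1 (Amat 0 j l) = 0
    · apply Finset.sum_eq_zero
      intro j _
      rw [coeff_C_mul, hex j, mul_zero]
    · push_neg at hex
      obtain ⟨j0, hj0⟩ := hex
      have ht1 : t1.degree = 1 := by
        by_contra hcon
        exact hj0 ((hA 0 j0 l).coeff_eq_zero hcon)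
      rw [deg_two] at ht1
      have h0 : t1 0 + t2 0 = δ := by
        rw [← Finsupp.add_apply, hmem, fvec_apply0]
      have h1 : t1 1 + t2 1 = 0 := by
        rw [← Finsupp.add_apply, hmem, fvec_apply1]
      have he1 : t1 = fvec 1 0 :=
        finsupp2_ext (by rw [fvec_apply0]; omega) (by rw [fvec_apply1]; omega)
      rw [he1, Finset.sum_congr rfl (fun j _ => coeff_C_mul (fvec 1 0) (κ j) (Amat 0 j l))]
      exact hbeta l
  have h1 : coeff (fvec δ 0) (mm K δ 0) = 1 := by rw [coeff_mm, if_pos rfl]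
  rw [hPhi] at hrepr
  rw [hrepr, h2] at h1
  exact one_ne_zero h1.symm

lemma res_to_steps (hdeg : ∀ u ∈ G, mdeg u = d)
    (hres : HasLinearResolution K d (Ideal.span (monOf K '' G))) :
    StepDown G ∧ StepUp G := by
  have gap := res_gap hdeg hres
  constructor
  · intro u hu v hv hlt
    by_contra hne
    have hud := sum_eq_d hdeg hu
    have hvd := sum_eq_d hdeg hv
    have hnotm1 : ∀ w ∈ G, w 0 ≠ u 0 - 1 := by
      intro w hw heq
      apply hne
      have hwd := sum_eq_d hdeg hw
      have hweq : w = exch u 0 1 := by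
        funext l
        rcases fin2cases l with rfl | rfl
        · rw [(exch01_apply u).1]; omega
        · rw [(exch01_apply u).2]; omega
      exact hweq ▸ hw
    set B : Set ℕ := {t | (∃ w ∈ G, w 0 = t) ∧ t < u 0} with hBdef
    have hBne : B.Nonempty := ⟨v 0, ⟨v, hv, rfl⟩, hlt⟩
    have hBdd : BddAbove B := ⟨u 0, fun t ht => le_of_lt ht.2⟩
    have haB : sSup B ∈ B := Nat.sSup_mem hBne hBdd
    obtain ⟨⟨w, hw, hw0⟩, halt⟩ := haB
    have hane : sSup B ≠ u 0 - 1 := hw0 ▸ hnotm1 w hw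
    have hlt2 : sSup B + 1 < u 0 := by omega
    have hnext : ∀ w' ∈ G, w' 0 ≠ w 0 + 1 := by
      intro w' hw' heq
      have hmem : w' 0 ∈ B := ⟨⟨w', hw', rfl⟩, by omega⟩
      have hle := le_csSup hBdd hmem
      omega
    exact gap w u hw hu (by omega) hnext
  · intro u hu v hv hlt
    by_contra hne
    have hud := sum_eq_d hdeg hu
    have hvd := sum_eq_d hdeg hv
    have hnext : ∀ w ∈ G, w 0 ≠ u 0 + 1 := by
      intro w hw heq
      apply hne
      have hwd := sum_eq_d hdeg hw
      have hweq : w = exch u 1 0 := by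
        funext l
        rcases fin2cases l with rfl | rfl
        · rw [(exch10_apply u).1]; omega
        · rw [(exch10_apply u).2]; omega
      exact hweq ▸ hw
    exact gap u v hu hv (by
      have := hnext v hv
      omega) hnext

end PartC

/-- For a monomial ideal of `K[x_1,x_2]` generated in a single degree `d`, the following
are equivalent: (a) `I` is polymatroidal; (b) `I` has linear quotients with respect to
the reverse lexicographic ordering of the minimal generators induced by every ordering
of the variables; (c) `I` has a linear resolution. -/
theorem stmt_3 (K : Type) [Field K] {d : ℕ} (G : Set (Mon 2))
    (hdeg : ∀ u ∈ G, mdeg u = d) :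
    (IsPolymatroidal G ↔
        ∀ σ : Fin 2 → Fin 2, Function.Bijective σ → LinQuot G (rlexGT σ)) ∧
    (IsPolymatroidal G ↔ HasLinearResolution K d (Ideal.span (monOf K '' G))) := by
  constructor
  · exact (poly_iff_steps hdeg).trans (linquot_iff_steps hdeg).symm
  · constructor
    · intro hp
      obtain ⟨hsd, hsu⟩ := (poly_iff_steps hdeg).mp hp
      exact steps_to_res hdeg hsd hsu
    · intro hres
      exact (poly_iff_steps hdeg).mpr (res_to_steps hdeg hres)
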